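/- With stiffness ξ uniform on [k_a,k_b], 0 < k_a < k_b, the second moment of the displacement response u(t,ξ) = a·cos(√(ξ/m)t) + (b/√(ξ/m))·sin(√(ξ/m)t) satisfies lim_{t→∞} (1/(k_b−k_a)) ∫_{k_a}^{k_b} u(t,ξ)² dξ = a²/2 + (m·b²/(2(k_b−k_a)))·ln(k_b/k_a). -/

import Mathlib

open Filter MeasureTheory Real Topology

lemma rl_aux (f g : ℝ → ℝ) (hf : Integrable f) (hg : Integrable g) :
    Tendsto (fun t : ℝ => ∫ v : ℝ, (f v * Real.cos (2*(v*t)) + g v * Real.sin (2*(v*t))))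
      atTop (𝓝 0) := by
  have hH : Integrable (fun v : ℝ => (f v : ℂ) + Complex.I * (g v : ℂ)) :=
    (hf.ofReal).add ((hg.ofReal).const_mul _)
  have h0 := Real.tendsto_integral_exp_smul_cocompact
    (fun v : ℝ => (f v : ℂ) + Complex.I * (g v : ℂ))
  have hmap : Tendsto (fun t : ℝ => t / π) atTop (Filter.cocompact ℝ) := by
    rw [cocompact_eq_atBot_atTop]
    exact (Filter.tendsto_id.atTop_div_const Real.pi_pos).mono_right le_sup_right
  have h1 := h0.comp hmap
  have h2 := (Complex.continuous_re.tendsto 0).comp h1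
  simp only [Function.comp_def, Complex.zero_re] at h2
  convert h2 using 2 with t
  have hInt : Integrable (fun v : ℝ =>
      (Real.fourierChar (-(v * (t/π))) : ℂ) * ((f v : ℂ) + Complex.I * (g v : ℂ))) := by
    apply hH.bdd_mul (c := 1)
    · exact (Continuous.aestronglyMeasurable (by continuity))
    · exact ae_of_all _ (fun v => (Circle.norm_coe _).le)
  simp only [Circle.smul_def, smul_eq_mul]
  have hre := _root_.integral_re hInt
  simp only [RCLike.re_to_complex] at hre
  rw [← hre]
  apply integral_congr_ae; filter_upwards with v
  simp only [Real.fourierChar_apply, RCLike.re_to_complex]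
  have h3 : 2 * π * -(v * (t / π)) = -(2*(v*t)) := by field_simp
  rw [h3]
  simp only [Complex.mul_re, Complex.add_re, Complex.add_im, Complex.mul_im,
    Complex.exp_ofReal_mul_I_re, Complex.exp_ofReal_mul_I_im, Complex.ofReal_re,
    Complex.ofReal_im, Complex.I_re, Complex.I_im, Real.cos_neg, Real.sin_neg]
  ring

theorem stmt3 (m ka kb a b : ℝ) (hm : 0 < m) (hka : 0 < ka) (hkb : ka < kb) :
    Filter.Tendsto
      (fun t : ℝ => (1 / (kb - ka)) *
        ∫ ξ in ka..kb,
          (a * Real.cos (Real.sqrt (ξ / m) * t)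
            + (b / Real.sqrt (ξ / m)) * Real.sin (Real.sqrt (ξ / m) * t)) ^ 2)
      Filter.atTop
      (nhds (a ^ 2 / 2 + (m * b ^ 2 / (2 * (kb - ka))) * Real.log (kb / ka))) := by
  have hm' : m ≠ 0 := ne_of_gt hm
  have hkb0 : 0 < kb := hka.trans hkb
  set sa := Real.sqrt (ka/m) with hsadef
  set sb := Real.sqrt (kb/m) with hsbdef
  have hsa : 0 < sa := Real.sqrt_pos.2 (div_pos hka hm)
  have hsb : 0 < sb := Real.sqrt_pos.2 (div_pos hkb0 hm)
  have hsab : sa < sb := Real.sqrt_lt_sqrt (div_pos hka hm).le (by gcongr)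
  have hka2 : m * sa^2 = ka := by
    rw [hsadef, Real.sq_sqrt (div_pos hka hm).le]; field_simp
  have hkb2 : m * sb^2 = kb := by
    rw [hsbdef, Real.sq_sqrt (div_pos hkb0 hm).le]; field_simp
  have hpos : ∀ s ∈ Set.uIcc sa sb, 0 < s := by
    intro s hs
    rw [Set.uIcc_of_le hsab.le] at hs
    exact lt_of_lt_of_le hsa hs.1
  set F : ℝ → ℝ := fun s => m*a^2*s - m*b^2/s with hFdef
  set G : ℝ → ℝ := fun s => 2*m*a*b with hGdef
  -- substitution ξ = m s^2
  have hsubst : ∀ t : ℝ, (∫ ξ in ka..kb,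
        (a * Real.cos (Real.sqrt (ξ / m) * t)
          + (b / Real.sqrt (ξ / m)) * Real.sin (Real.sqrt (ξ / m) * t)) ^ 2)
      = ∫ s in sa..sb, (2*m*s) * ((a * Real.cos (s*t) + (b/s) * Real.sin (s*t))^2) := by
    intro t
    have hder : ∀ x ∈ Set.uIcc sa sb, HasDerivAt (fun s : ℝ => m * s^2) (2*m*x) x := by
      intro x _
      have h := (hasDerivAt_pow 2 x).const_mul m
      exact h.congr_deriv (by ring)
    have hcont : ContinuousOn (fun x : ℝ => 2*m*x) (Set.uIcc sa sb) :=
      (continuous_const.mul continuous_id).continuousOn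
    have himg : ((fun s : ℝ => m * s^2) '' Set.uIcc sa sb) ⊆ Set.Ioi 0 := by
      rintro _ ⟨s, hs, rfl⟩
      have hsp := hpos s hs
      exact mul_pos hm (pow_pos hsp 2)
    have hsq : Continuous (fun ξ : ℝ => Real.sqrt (ξ/m)) :=
      Real.continuous_sqrt.comp (continuous_id.div_const m)
    have hne : ∀ ξ ∈ Set.Ioi (0:ℝ), Real.sqrt (ξ/m) ≠ 0 :=
      fun ξ hξ => ne_of_gt (Real.sqrt_pos.2 (div_pos hξ hm))
    have hgcont : ContinuousOn (fun ξ : ℝ =>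
        (a * Real.cos (Real.sqrt (ξ / m) * t)
          + (b / Real.sqrt (ξ / m)) * Real.sin (Real.sqrt (ξ / m) * t)) ^ 2) (Set.Ioi 0) := by
      apply ContinuousOn.pow
      apply ContinuousOn.add
      · exact (continuous_const.mul (Real.continuous_cos.comp
          (hsq.mul continuous_const))).continuousOn
      · exact (continuousOn_const.div hsq.continuousOn hne).mul
          (Real.continuous_sin.comp (hsq.mul continuous_const)).continuousOn
    have hchg := intervalIntegral.integral_comp_smul_deriv' hder hcont (hgcont.mono himg)
    rw [hka2, hkb2] at hchg
    rw [← hchg]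
    apply intervalIntegral.integral_congr
    intro s hs
    have hsp := hpos s hs
    have h1 : m * s^2 / m = s^2 := by field_simp
    simp only [Function.comp_apply, smul_eq_mul]
    rw [h1, Real.sqrt_sq hsp.le]
  -- integrability
  have hint1 : IntervalIntegrable (fun s : ℝ => m*a^2*s + m*b^2/s) volume sa sb := by
    apply ContinuousOn.intervalIntegrable
    exact (continuous_const.mul continuous_id).continuousOn.add
      (continuousOn_const.div continuousOn_id (fun s hs => (hpos s hs).ne'))
  have hFcont : ContinuousOn F (Set.uIcc sa sb) :=
    (continuous_const.mul continuous_id).continuousOn.sub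
      (continuousOn_const.div continuousOn_id (fun s hs => (hpos s hs).ne'))
  have hint2 : ∀ t : ℝ, IntervalIntegrable
      (fun s : ℝ => F s * Real.cos (2*(s*t)) + G s * Real.sin (2*(s*t))) volume sa sb := by
    intro t
    apply ContinuousOn.intervalIntegrable
    have harg : Continuous fun s : ℝ => 2*(s*t) :=
      continuous_const.mul (continuous_id.mul continuous_const)
    have hcos : Continuous fun s : ℝ => Real.cos (2*(s*t)) := Real.continuous_cos.comp harg
    have hsin : Continuous fun s : ℝ => Real.sin (2*(s*t)) := Real.continuous_sin.comp harg
    exact (hFcont.mul hcos.continuousOn).add (continuousOn_const.mul hsin.continuousOn)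
  -- expansion
  have hexp : ∀ t : ℝ, (∫ s in sa..sb, (2*m*s) * ((a * Real.cos (s*t) + (b/s) * Real.sin (s*t))^2))
      = (∫ s in sa..sb, (m*a^2*s + m*b^2/s))
        + ∫ s in sa..sb, (F s * Real.cos (2*(s*t)) + G s * Real.sin (2*(s*t))) := by
    intro t
    rw [← intervalIntegral.integral_add hint1 (hint2 t)]
    apply intervalIntegral.integral_congr
    intro s hs
    have hs0 : s ≠ 0 := (hpos s hs).ne'
    simp only [hFdef, hGdef]
    rw [Real.cos_two_mul, Real.sin_two_mul]
    have hs1 : Real.sin (s*t)^2 = 1 - Real.cos (s*t)^2 := Real.sin_sq (s*t)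
    field_simp
    linear_combination (2*b^2) * hs1
  -- value of the non-oscillatory integral
  have hval : (∫ s in sa..sb, (m*a^2*s + m*b^2/s))
      = a^2*(kb-ka)/2 + m*b^2*(Real.log (kb/ka)/2) := by
    have ha1 : IntervalIntegrable (fun s : ℝ => m*a^2*s) volume sa sb :=
      (continuous_const.mul continuous_id).intervalIntegrable _ _
    have ha2 : IntervalIntegrable (fun s : ℝ => m*b^2/s) volume sa sb := by
      apply ContinuousOn.intervalIntegrable
      exact continuousOn_const.div continuousOn_id (fun s hs => (hpos s hs).ne')
    rw [intervalIntegral.integral_add ha1 ha2]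
    have e1 : (∫ s in sa..sb, m*a^2*s) = m*a^2 * ((sb^2-sa^2)/2) := by
      rw [show (fun s : ℝ => m*a^2*s) = fun s : ℝ => (m*a^2) * s from rfl,
        intervalIntegral.integral_const_mul, integral_id]
    have e2 : (∫ s in sa..sb, m*b^2/s) = m*b^2 * Real.log (sb/sa) := by
      have h0 : (0:ℝ) ∉ Set.uIcc sa sb := fun h => absurd (hpos 0 h) (lt_irrefl 0)
      simp_rw [div_eq_mul_one_div (m*b^2)]
      rw [intervalIntegral.integral_const_mul, integral_one_div h0]
    rw [e1, e2]
    have e3 : Real.log (sb/sa) = Real.log (kb/ka)/2 := by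
      rw [Real.log_div hsb.ne' hsa.ne', hsadef, hsbdef,
        Real.log_sqrt (div_pos hkb0 hm).le, Real.log_sqrt (div_pos hka hm).le,
        Real.log_div hkb0.ne' hm', Real.log_div hka.ne' hm',
        Real.log_div hkb0.ne' hka.ne']
      ring
    rw [e3]
    linear_combination (a^2/2) * hkb2 - (a^2/2) * hka2
  -- oscillatory integral tends to 0
  have hosc : Tendsto (fun t : ℝ =>
      ∫ s in sa..sb, (F s * Real.cos (2*(s*t)) + G s * Real.sin (2*(s*t)))) atTop (𝓝 0) := by
    have hFint : IntegrableOn F (Set.Ioc sa sb) := by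
      apply ContinuousOn.integrableOn_Icc (by rwa [Set.uIcc_of_le hsab.le] at hFcont)
        |>.mono_set Set.Ioc_subset_Icc_self
    have hGint : IntegrableOn G (Set.Ioc sa sb) := by
      apply (continuousOn_const (c := 2*m*a*b)).integrableOn_Icc.mono_set
        Set.Ioc_subset_Icc_self
    have hFi : Integrable (Set.indicator (Set.Ioc sa sb) F) :=
      (integrable_indicator_iff measurableSet_Ioc).2 hFint
    have hGi : Integrable (Set.indicator (Set.Ioc sa sb) G) :=
      (integrable_indicator_iff measurableSet_Ioc).2 hGint
    have hrl := rl_aux _ _ hFi hGi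
    convert hrl using 2 with t
    rw [intervalIntegral.integral_of_le hsab.le,
      ← MeasureTheory.integral_indicator measurableSet_Ioc]
    apply integral_congr_ae; filter_upwards with v
    by_cases hv : v ∈ Set.Ioc sa sb
    · simp [Set.indicator_of_mem hv]
    · simp [Set.indicator_of_notMem hv]
  -- assemble
  have heq : (fun t : ℝ => (1 / (kb - ka)) *
        ∫ ξ in ka..kb,
          (a * Real.cos (Real.sqrt (ξ / m) * t)
            + (b / Real.sqrt (ξ / m)) * Real.sin (Real.sqrt (ξ / m) * t)) ^ 2)
      = fun t : ℝ => (1/(kb-ka)) * ((a^2*(kb-ka)/2 + m*b^2*(Real.log (kb/ka)/2))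
          + ∫ s in sa..sb, (F s * Real.cos (2*(s*t)) + G s * Real.sin (2*(s*t)))) := by
    funext t
    rw [hsubst t, hexp t, hval]
  rw [heq]
  have hne : kb - ka ≠ 0 := ne_of_gt (sub_pos.2 hkb)
  have hC : a^2/2 + m*b^2/(2*(kb-ka)) * Real.log (kb/ka)
      = 1/(kb-ka) * ((a^2*(kb-ka)/2 + m*b^2*(Real.log (kb/ka)/2)) + 0) := by
    field_simp
    ring
  rw [hC]
  exact (tendsto_const_nhds.add hosc).const_mul (1/(kb-ka))
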